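/- Let Γ be a group and N a normal subgroup such that N has bounded finite subgroups and Γ/N is Jordan with a uniform bound R on the number of generators of finite subgroups. Then every finite subgroup G of Γ contains a normal abelian subgroup of index bounded by a constant depending only on the bounds for N and Γ/N. -/

import Mathlib

open Subgroup

theorem jordan_aux (B J R : ℕ) {G Q : Type} [Group G] [Finite G] [Group Q] (φ : G →* Q)
    (hB : Nat.card φ.ker ≤ B)
    (hJ : ∀ G' : Subgroup Q, Finite G' →
        ∃ A : Subgroup G', A.Normal ∧ IsMulCommutative A ∧ A.index ≤ J)
    (hR : ∀ G' : Subgroup Q, Finite G' →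
        ∃ S : Set G', S.Finite ∧ Nat.card S ≤ R ∧ Subgroup.closure S = ⊤) :
    ∃ A : Subgroup G, A.Normal ∧ IsMulCommutative A ∧
      A.index ≤ (B ^ R * (J * Nat.factorial B)).factorial := by
  classical
  haveI : Finite ↥φ.range := Finite.of_surjective _ φ.rangeRestrict_surjective
  obtain ⟨A', hA'n, hA'c, hA'J⟩ := hJ φ.range inferInstance
  set Abar : Subgroup G := A'.comap φ.rangeRestrict with hAbar
  haveI hAbarN : Abar.Normal := hA'n.comap _
  have hAbarI : Abar.index ≤ J := by
    rw [hAbar, index_comap_of_surjective _ φ.rangeRestrict_surjective]; exact hA'J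
  -- the conjugation action on the kernel
  set c : G →* MulAut ↥φ.ker := MulAut.conjNormal with hc
  have hcker : c.ker.index ≤ Nat.factorial B := by
    calc c.ker.index = Nat.card c.range := Subgroup.index_ker c
      _ ≤ Nat.card (MulAut ↥φ.ker) := Nat.card_le_card_of_injective _ Subtype.val_injective
      _ ≤ Nat.card (Equiv.Perm ↥φ.ker) :=
          Nat.card_le_card_of_injective _ MulEquiv.toEquiv_injective
      _ = (Nat.card ↥φ.ker).factorial := by
          haveI := Fintype.ofFinite ↥φ.ker
          rw [Nat.card_eq_fintype_card, Nat.card_eq_fintype_card, Fintype.card_perm]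
      _ ≤ B.factorial := Nat.factorial_le hB
  set Z : Subgroup G := Abar ⊓ c.ker with hZ
  have hZI : Z.index ≤ J * Nat.factorial B :=
    le_trans index_inf_le (Nat.mul_le_mul hAbarI hcker)
  -- elements of Z centralize the kernel
  have hZcent : ∀ z ∈ Z, ∀ k ∈ φ.ker, z * k * z⁻¹ = k := by
    intro z hz k hk
    have h1 : c z = 1 := MonoidHom.mem_ker.mp hz.2
    have := congrArg (fun (e : MulAut ↥φ.ker) => ((e ⟨k, hk⟩ : ↥φ.ker) : G)) h1
    simpa [hc, MulAut.conjNormal_apply] using this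
  -- commutators of elements of Abar lie in the kernel
  have hcommK : ∀ z ∈ Abar, ∀ s ∈ Abar, z * s * z⁻¹ * s⁻¹ ∈ φ.ker := by
    intro z hz s hs
    have hcomm : φ.rangeRestrict z * φ.rangeRestrict s
        = φ.rangeRestrict s * φ.rangeRestrict z := by
      have := mul_comm_of_mem_isMulCommutative (H := A') hz hs
      exact_mod_cast this
    have : φ z * φ s = φ s * φ z := by
      have := congrArg (Subtype.val) hcomm
      simpa using this
    simp only [MonoidHom.mem_ker, map_mul, map_inv]
    group
    rw [this]
    group
  -- the image of Z in Q
  set QZ : Subgroup Q := Z.map φ with hQZ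
  haveI hQZfin : Finite ↥QZ := by
    have hfin : ((QZ : Set Q)).Finite := by
      rw [hQZ, Subgroup.coe_map]
      exact (Set.toFinite _).image φ
    exact hfin.to_subtype
  obtain ⟨S, hSfin, hScard, hStop⟩ := hR QZ inferInstance
  have hlift : ∀ s : ↥QZ, ∃ z, z ∈ Z ∧ φ z = ↑s := by
    intro s
    obtain ⟨z, hz, hzs⟩ := Subgroup.mem_map.mp s.2
    exact ⟨z, hz, hzs⟩
  choose l hlZ hlφ using hlift
  set T : Set G := l '' S with hT
  have hTfin : T.Finite := hSfin.image l
  have hTcard : Nat.card T ≤ R := le_trans (Nat.card_image_le hSfin) hScard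
  have hTZ : T ⊆ (Z : Set G) := by
    rintro t ⟨s, _, rfl⟩; exact hlZ s
  set D : Subgroup G := Subgroup.closure (↑φ.ker ∪ T) with hD
  have hKD : φ.ker ≤ D := fun k hk => Subgroup.subset_closure (Or.inl hk)
  have hZD : (Z : Set G) ⊆ ↑D := by
    intro z hz
    have h1 : φ z ∈ QZ := Subgroup.mem_map.mpr ⟨z, hz, rfl⟩
    have hQZle : QZ ≤ Subgroup.closure (φ '' T) := by
      have e1 : QZ = Subgroup.closure (QZ.subtype '' S) := by
        rw [← MonoidHom.map_closure, hStop, ← MonoidHom.range_eq_map, Subgroup.range_subtype]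
      rw [e1]
      apply Subgroup.closure_le _ |>.mpr
      rintro x ⟨s, hs, rfl⟩
      have : QZ.subtype s = φ (l s) := (hlφ s).symm
      rw [this]
      exact Subgroup.subset_closure ⟨l s, Set.mem_image_of_mem l hs, rfl⟩
    have h3 : φ z ∈ Subgroup.map φ D := by
      have h2 : Subgroup.closure (φ '' T) ≤ Subgroup.map φ D := by
        rw [← MonoidHom.map_closure]
        exact Subgroup.map_mono (Subgroup.closure_mono Set.subset_union_right)
      exact h2 (hQZle h1)
    have h4 : z ∈ Subgroup.comap φ (Subgroup.map φ D) := h3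
    rw [Subgroup.comap_map_eq, sup_of_le_left hKD] at h4
    exact h4
  -- commutator homomorphisms
  have hmul : ∀ t ∈ T, ∀ z w : ↥Z,
      ((z * w : ↥Z) : G) * t * ((z * w : ↥Z) : G)⁻¹ * t⁻¹
        = ((z : G) * t * (z : G)⁻¹ * t⁻¹) * ((w : G) * t * (w : G)⁻¹ * t⁻¹) := by
    intro t ht z w
    have htZ : t ∈ Z := hTZ ht
    have hcwK : (w : G) * t * (w : G)⁻¹ * t⁻¹ ∈ φ.ker :=
      hcommK _ w.2.1 _ htZ.1
    have hczK : (z : G) * t * (z : G)⁻¹ * t⁻¹ ∈ φ.ker :=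
      hcommK _ z.2.1 _ htZ.1
    have hczZ : (z : G) * t * (z : G)⁻¹ * t⁻¹ ∈ Z :=
      Z.mul_mem (Z.mul_mem (Z.mul_mem z.2 htZ) (Z.inv_mem z.2)) (Z.inv_mem htZ)
    have step2 : (z : G) * ((w : G) * t * (w : G)⁻¹ * t⁻¹) * (z : G)⁻¹
        = (w : G) * t * (w : G)⁻¹ * t⁻¹ := hZcent _ z.2 _ hcwK
    have step3 : ((z : G) * t * (z : G)⁻¹ * t⁻¹) * ((w : G) * t * (w : G)⁻¹ * t⁻¹)
        * ((z : G) * t * (z : G)⁻¹ * t⁻¹)⁻¹ = (w : G) * t * (w : G)⁻¹ * t⁻¹ :=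
      hZcent _ hczZ _ hcwK
    have key : ((z * w : ↥Z) : G) * t * ((z * w : ↥Z) : G)⁻¹ * t⁻¹
        = ((z : G) * ((w : G) * t * (w : G)⁻¹ * t⁻¹) * (z : G)⁻¹)
          * ((z : G) * t * (z : G)⁻¹ * t⁻¹) := by
      push_cast
      group
    rw [key, step2]
    calc ((w : G) * t * (w : G)⁻¹ * t⁻¹) * ((z : G) * t * (z : G)⁻¹ * t⁻¹)
        = (((z : G) * t * (z : G)⁻¹ * t⁻¹) * ((w : G) * t * (w : G)⁻¹ * t⁻¹)
            * ((z : G) * t * (z : G)⁻¹ * t⁻¹)⁻¹) * ((z : G) * t * (z : G)⁻¹ * t⁻¹) := by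
          rw [step3]
      _ = _ := by group
  haveI : Fintype ↥T := hTfin.fintype
  set fT : ↥T → (↥Z →* G) := fun t =>
    MonoidHom.mk' (fun z => (z : G) * ↑t * (z : G)⁻¹ * (↑t)⁻¹)
      (fun z w => hmul ↑t t.2 z w) with hfT
  set W : Subgroup ↥Z := ⨅ t : ↥T, (fT t).ker with hW
  have hB1 : 1 ≤ B := le_trans Nat.card_pos hB
  have hWidx : W.index ≤ B ^ R := by
    calc W.index ≤ ∏ t : ↥T, (fT t).ker.index := Subgroup.index_iInf_le _
      _ ≤ ∏ _t : ↥T, B := by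
          apply Finset.prod_le_prod' 
          intro t _
          calc (fT t).ker.index = Nat.card (fT t).range := Subgroup.index_ker _
            _ ≤ Nat.card ↥φ.ker := by
                apply Subgroup.card_le_of_le
                rintro x ⟨z, rfl⟩
                exact hcommK _ z.2.1 _ (hTZ t.2).1
            _ ≤ B := hB
      _ = B ^ (Fintype.card ↥T) := by rw [Finset.prod_const, Finset.card_univ]
      _ ≤ B ^ R := Nat.pow_le_pow_right hB1 (by rwa [← Nat.card_eq_fintype_card])
  set A1 : Subgroup G := W.map Z.subtype with hA1
  have hA1idx : A1.index ≤ B ^ R * (J * Nat.factorial B) := by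
    rw [hA1, Subgroup.index_map_subtype]
    exact Nat.mul_le_mul hWidx hZI
  have hA1comm : ∀ a ∈ A1, ∀ b ∈ A1, a * b = b * a := by
    intro a ha b hb
    obtain ⟨w, hw, rfl⟩ := Subgroup.mem_map.mp ha
    obtain ⟨w', hw', rfl⟩ := Subgroup.mem_map.mp hb
    have hwD : D ≤ Subgroup.centralizer {(Z.subtype w : G)} := by
      rw [hD]
      apply Subgroup.closure_le _ |>.mpr
      intro x hx
      rw [SetLike.mem_coe, Subgroup.mem_centralizer_iff]
      rintro h rfl
      rcases hx with hxK | hxT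
      · have h2 : (w : G) * x * (w : G)⁻¹ = x := hZcent _ w.2 _ hxK
        calc (w : G) * x = ((w : G) * x * (w : G)⁻¹) * (w : G) := by group
          _ = x * (w : G) := by rw [h2]
      · have h1 : (fT ⟨x, hxT⟩) w = 1 := by
          have := Subgroup.mem_iInf.mp hw ⟨x, hxT⟩
          exact this
        have h1' : (w : G) * x * (w : G)⁻¹ * x⁻¹ = 1 := h1
        have h2 : (w : G) * x * (w : G)⁻¹ = x := by rwa [mul_inv_eq_one] at h1'
        calc (w : G) * x = ((w : G) * x * (w : G)⁻¹) * (w : G) := by group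
          _ = x * (w : G) := by rw [h2]
    have := hwD (hZD w'.2)
    rw [Subgroup.mem_centralizer_iff] at this
    exact this _ rfl
  refine ⟨A1.normalCore, inferInstance, ?_, ?_⟩
  · constructor
    constructor
    intro a b
    apply Subtype.ext
    exact hA1comm _ (A1.normalCore_le a.2) _ (A1.normalCore_le b.2)
  · have hcore : A1.normalCore.index ≤ (A1.index).factorial := by
      rw [Subgroup.normalCore_eq_ker]
      calc (MulAction.toPermHom G (G ⧸ A1)).ker.index
          = Nat.card (MulAction.toPermHom G (G ⧸ A1)).range := Subgroup.index_ker _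
        _ ≤ Nat.card (Equiv.Perm (G ⧸ A1)) := Nat.card_le_card_of_injective _ Subtype.val_injective
        _ = (Nat.card (G ⧸ A1)).factorial := by
            haveI := Fintype.ofFinite (G ⧸ A1)
            rw [Nat.card_eq_fintype_card, Nat.card_eq_fintype_card, Fintype.card_perm]
        _ = (A1.index).factorial := by rw [Subgroup.index_eq_card]
    exact le_trans hcore (Nat.factorial_le hA1idx)


/-!
STATEMENT 8.  Let `Γ` be a group and `N` a normal subgroup such that `N` has bounded
finite subgroups (bound `B`) and `Γ/N` is Jordan with constant `J`, with finite subgroups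
of `Γ/N` generated by at most `R` elements.  Then every finite subgroup `G` of `Γ`
contains a normal abelian subgroup of index bounded by a constant `C = C(B, J, R)`
depending only on the bounds.
-/
theorem jordan_of_extension_with_constant (B J R : ℕ) :
    ∃ C : ℕ, ∀ (Γ : Type) [Group Γ] (N : Subgroup Γ) [N.Normal],
      (∀ H : Subgroup N, Finite H → Nat.card H ≤ B) →
      (∀ G' : Subgroup (Γ ⧸ N), Finite G' →
        ∃ A : Subgroup G', A.Normal ∧ IsMulCommutative A ∧ A.index ≤ J) →
      (∀ G' : Subgroup (Γ ⧸ N), Finite G' →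
        ∃ S : Set G', S.Finite ∧ Nat.card S ≤ R ∧ Subgroup.closure S = ⊤) →
      ∀ G : Subgroup Γ, Finite G →
        ∃ A : Subgroup G, A.Normal ∧ IsMulCommutative A ∧ A.index ≤ C := by
  refine ⟨(B ^ R * (J * Nat.factorial B)).factorial, ?_⟩
  intro Γ _ N _ hN hJ hR G hG
  haveI := hG
  set φ : ↥G →* Γ ⧸ N := (QuotientGroup.mk' N).comp G.subtype with hφ
  have hker : φ.ker = N.subgroupOf G := by
    rw [hφ, ← MonoidHom.comap_ker, QuotientGroup.ker_mk']
    rfl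
  have e : ↥(N.subgroupOf G) ≃ ↥(G.subgroupOf N) :=
    { toFun := fun x => ⟨⟨↑↑x, Subgroup.mem_subgroupOf.mp x.2⟩,
        Subgroup.mem_subgroupOf.mpr x.1.2⟩
      invFun := fun y => ⟨⟨↑↑y, Subgroup.mem_subgroupOf.mp y.2⟩,
        Subgroup.mem_subgroupOf.mpr y.1.2⟩
      left_inv := fun _ => rfl
      right_inv := fun _ => rfl }
  haveI : Finite ↥(N.subgroupOf G) := by rw [← hker]; infer_instance
  haveI : Finite ↥(G.subgroupOf N) := Finite.of_equiv _ e
  have hcard : Nat.card φ.ker ≤ B := by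
    calc Nat.card ↥φ.ker = Nat.card ↥(N.subgroupOf G) := by rw [hker]
      _ = Nat.card ↥(G.subgroupOf N) := Nat.card_congr e
      _ ≤ B := hN _ inferInstance
  exact jordan_aux B J R φ hcard hJ hR
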